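/- If a tuple of matrices A_1, ..., A_{p+1} in gl(n, ℂ) (n ≥ 2) with zero sum has generic eigenvalues (i.e. no non-genericity relation holds), then the tuple is irreducible: the matrices have no common invariant subspace V with 0 < dim V < n. -/

import Mathlib

open Polynomial Matrix

private lemma monic_dvd_prod_X_sub_C {ι : Type*} [DecidableEq ι] (f : ι → ℂ) :
    ∀ (s : Finset ι) (q : ℂ[X]), q.Monic → q ∣ ∏ k ∈ s, (X - C (f k)) →
      ∃ Φ, Φ ⊆ s ∧ q = ∏ k ∈ Φ, (X - C (f k)) := by
  intro s
  induction s using Finset.strongInductionOn with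
  | _ s ih =>
    intro q hq hdvd
    rcases eq_or_ne q.natDegree 0 with h0 | h0
    · exact ⟨∅, Finset.empty_subset s, by
        simpa using hq.natDegree_eq_zero.mp h0⟩
    · have hdeg : 0 < q.degree := by
        rw [← Polynomial.natDegree_pos_iff_degree_pos]
        exact Nat.pos_of_ne_zero h0
      obtain ⟨r, hr⟩ := Complex.exists_root hdeg
      have hrprod : (∏ k ∈ s, (X - C (f k))).IsRoot r := hr.dvd hdvd
      obtain ⟨k, hk, hk0⟩ := Finset.prod_eq_zero_iff.mp (by
        simpa [Polynomial.IsRoot, Polynomial.eval_prod] using hrprod)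
      have hrk : r = f k := by
        have := hk0
        linear_combination this
      have hXdvd : (X - C (f k)) ∣ q := by
        rw [Polynomial.dvd_iff_isRoot]
        rwa [← hrk]
      obtain ⟨q₁, hq₁⟩ := hXdvd
      have hq₁m : q₁.Monic := (monic_X_sub_C (f k)).of_mul_monic_left (hq₁ ▸ hq)
      have hdvd' : q₁ ∣ ∏ i ∈ s.erase k, (X - C (f i)) := by
        have hprod : ∏ i ∈ s, (X - C (f i))
            = (X - C (f k)) * ∏ i ∈ s.erase k, (X - C (f i)) :=
          (Finset.mul_prod_erase s _ hk).symm
        rw [hq₁, hprod] at hdvd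
        exact (mul_dvd_mul_iff_left (X_sub_C_ne_zero (f k))).mp hdvd
      obtain ⟨Φ, hΦs, hΦeq⟩ := ih (s.erase k) (Finset.erase_ssubset hk) q₁ hq₁m hdvd'
      have hknot : k ∉ Φ := fun h => (Finset.ne_of_mem_erase (hΦs h)) rfl
      refine ⟨insert k Φ, ?_, ?_⟩
      · intro x hx
        rcases Finset.mem_insert.mp hx with h | h
        · exact h ▸ hk
        · exact Finset.mem_of_mem_erase (hΦs h)
      · rw [Finset.prod_insert hknot, ← hΦeq, ← hq₁]

theorem stmt9 (p n : ℕ) (hn : 2 ≤ n) (A : Fin (p + 1) → Matrix (Fin n) (Fin n) ℂ)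
    (hsum : ∑ j, A j = 0)
    (lam : Fin (p + 1) → Fin n → ℂ)
    (hlam : ∀ j, (A j).charpoly = ∏ k, (X - C (lam j k)))
    (hgen : ¬∃ (m : ℕ) (Φ : Fin (p + 1) → Finset (Fin n)),
      0 < m ∧ m < n ∧ (∀ j, (Φ j).card = m) ∧ ∑ j, ∑ k ∈ Φ j, lam j k = 0) :
    ∀ V : Submodule ℂ (Fin n → ℂ),
      (∀ j, ∀ v ∈ V, Matrix.toLin' (A j) v ∈ V) → V = ⊥ ∨ V = ⊤ := by
  intro V hV
  by_contra hcon
  push_neg at hcon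
  obtain ⟨hbot, htop⟩ := hcon
  exfalso
  apply hgen
  -- basic dimension facts
  have hm0 : 0 < Module.finrank ℂ V := by
    rcases Nat.eq_zero_or_pos (Module.finrank ℂ V) with h | h
    · exact absurd (Submodule.finrank_eq_zero.mp h) hbot
    · exact h
  have hmn : Module.finrank ℂ V < n := by
    have := Submodule.finrank_lt (K := ℂ) (V := Fin n → ℂ) htop
    rwa [Module.finrank_fin_fun] at this
  -- set up an adapted basis
  obtain ⟨W, hW⟩ := Submodule.exists_isCompl V
  let bV := Module.finBasis ℂ V
  let bW := Module.finBasis ℂ W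
  let e := Submodule.prodEquivOfIsCompl V W hW
  let b := (bV.prod bW).map e
  -- restricted endomorphisms and their matrices
  let g : Fin (p + 1) → V →ₗ[ℂ] V := fun j =>
    (Matrix.toLin' (A j)).restrict (fun x hx => hV j x hx)
  let N : Fin (p + 1) → Matrix (Fin (Module.finrank ℂ V)) (Fin (Module.finrank ℂ V)) ℂ :=
    fun j => LinearMap.toMatrix bV bV (g j)
  -- representation facts
  have hsymm : ∀ (x : Fin n → ℂ) (hx : x ∈ V), e.symm x = ((⟨x, hx⟩ : V), 0) := fun x hx =>
    Submodule.prodEquivOfIsCompl_symm_apply_left (p := V) (q := W) hW (⟨x, hx⟩ : V)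
  have hreprV : ∀ (x : Fin n → ℂ) (hx : x ∈ V) (i),
      b.repr x (Sum.inl i) = bV.repr (⟨x, hx⟩ : V) i := by
    intro x hx i
    show ((bV.prod bW).map e).repr x (Sum.inl i) = _
    rw [Module.Basis.map_repr]
    simp only [LinearEquiv.trans_apply, hsymm x hx, Module.Basis.prod_repr_inl]
  have hreprW : ∀ (x : Fin n → ℂ) (hx : x ∈ V) (i),
      b.repr x (Sum.inr i) = 0 := by
    intro x hx i
    show ((bV.prod bW).map e).repr x (Sum.inr i) = 0
    rw [Module.Basis.map_repr]
    simp only [LinearEquiv.trans_apply, hsymm x hx, Module.Basis.prod_repr_inr,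
      map_zero, Finsupp.coe_zero, Pi.zero_apply]
  have hbinl : ∀ k, b (Sum.inl k) = (bV k : Fin n → ℂ) := by
    intro k
    show e ((bV.prod bW) (Sum.inl k)) = _
    rw [Submodule.coe_prodEquivOfIsCompl']
    rw [Module.Basis.prod_apply_inl_fst, Module.Basis.prod_apply_inl_snd]
    simp
  -- the matrix of toLin' (A j) in the adapted basis is block triangular
  have hblock21 : ∀ j, (LinearMap.toMatrix b b (Matrix.toLin' (A j))).toBlocks₂₁ = 0 := by
    intro j
    ext i k
    have hmem : Matrix.toLin' (A j) (b (Sum.inl k)) ∈ V := by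
      rw [hbinl]; exact hV j _ (bV k).2
    simp only [Matrix.toBlocks₂₁, Matrix.of_apply, LinearMap.toMatrix_apply,
      Matrix.zero_apply]
    exact hreprW _ hmem i
  have hblock11 : ∀ j, (LinearMap.toMatrix b b (Matrix.toLin' (A j))).toBlocks₁₁ = N j := by
    intro j
    ext i k
    have hmem : Matrix.toLin' (A j) (b (Sum.inl k)) ∈ V := by
      rw [hbinl]; exact hV j _ (bV k).2
    simp only [Matrix.toBlocks₁₁, Matrix.of_apply, LinearMap.toMatrix_apply, N]
    have heq : (⟨Matrix.toLin' (A j) (b (Sum.inl k)), hmem⟩ : V) = g j (bV k) := by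
      apply Subtype.ext
      show Matrix.toLin' (A j) (b (Sum.inl k)) = ((g j) (bV k) : Fin n → ℂ)
      rw [hbinl]
      rfl
    rw [hreprV _ hmem i, heq]
  -- charpoly factorization
  have hchar : ∀ j, (N j).charpoly ∣ (A j).charpoly := by
    intro j
    have h1 : (LinearMap.toMatrix b b (Matrix.toLin' (A j))).charpoly = (A j).charpoly := by
      rw [LinearMap.charpoly_toMatrix,
        ← LinearMap.charpoly_toMatrix (Matrix.toLin' (A j)) (Pi.basisFun ℂ (Fin n)),
        LinearMap.toMatrix_eq_toMatrix', LinearMap.toMatrix'_toLin']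
    rw [← h1, ← Matrix.fromBlocks_toBlocks (LinearMap.toMatrix b b (Matrix.toLin' (A j))),
      hblock21 j, hblock11 j, Matrix.charpoly_fromBlocks_zero₂₁]
    exact Dvd.intro _ rfl
  haveI : Nonempty (Fin (Module.finrank ℂ V)) := ⟨⟨0, hm0⟩⟩
  -- getting the subsets Φ j
  have key : ∀ j, ∃ Φ : Finset (Fin n),
      Φ.card = Module.finrank ℂ V ∧ (N j).trace = ∑ k ∈ Φ, lam j k := by
    intro j
    have hdvd : (N j).charpoly ∣ ∏ k, (X - C (lam j k)) := (hlam j) ▸ hchar j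
    obtain ⟨Φ, -, hΦeq⟩ :=
      monic_dvd_prod_X_sub_C (lam j) Finset.univ (N j).charpoly (N j).charpoly_monic hdvd
    have hdegN : (N j).charpoly.natDegree = Module.finrank ℂ V := by
      rw [Matrix.charpoly_natDegree_eq_dim, Fintype.card_fin]
    have hcard : Φ.card = Module.finrank ℂ V := by
      rw [← hdegN, hΦeq, Polynomial.natDegree_prod _ _
        (fun i _ => X_sub_C_ne_zero (lam j i))]
      simp [Polynomial.natDegree_X_sub_C]
    refine ⟨Φ, hcard, ?_⟩
    rw [Matrix.trace_eq_neg_charpoly_coeff, Fintype.card_fin]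
    have hne : (N j).charpoly.natDegree ≠ 0 := by
      rw [hdegN]; exact hm0.ne'
    have hcoeff : (N j).charpoly.coeff (Module.finrank ℂ V - 1) = (N j).charpoly.nextCoeff := by
      rw [Polynomial.nextCoeff, if_neg hne, hdegN]
    rw [hcoeff, hΦeq, Polynomial.prod_X_sub_C_nextCoeff]
    simp
  choose Φ hcard htr using key
  refine ⟨Module.finrank ℂ V, Φ, hm0, hmn, hcard, ?_⟩
  -- the sum of the traces vanishes
  have hgsum : (∑ j, g j) = 0 := by
    apply LinearMap.ext
    intro x
    apply Subtype.ext
    have h1 : ((∑ j, g j) x : Fin n → ℂ) = ∑ j, ((g j x) : Fin n → ℂ) := by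
      rw [LinearMap.sum_apply]
      exact AddSubmonoidClass.coe_finset_sum _ _
    rw [h1, LinearMap.zero_apply]
    have h2 : ∀ j, ((g j x) : Fin n → ℂ) = Matrix.toLin' (A j) (x : Fin n → ℂ) := fun j => rfl
    simp_rw [h2]
    have h3 : ∑ j, Matrix.toLin' (A j) (x : Fin n → ℂ)
        = Matrix.toLin' (∑ j, A j) (x : Fin n → ℂ) := by
      rw [map_sum, LinearMap.sum_apply]
    rw [h3, hsum]
    simp
  have hNsum : ∑ j, N j = 0 := by
    have h1 : ∑ j, N j = (LinearMap.toMatrix bV bV).toLinearMap (∑ j, g j) :=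
      (map_sum ((LinearMap.toMatrix bV bV).toLinearMap) g Finset.univ).symm
    rw [h1, hgsum, map_zero]
  calc ∑ j, ∑ k ∈ Φ j, lam j k = ∑ j, (N j).trace := by
        exact Finset.sum_congr rfl fun j _ => (htr j).symm
    _ = Matrix.trace (∑ j, N j) := by rw [Matrix.trace_sum]
    _ = 0 := by rw [hNsum, Matrix.trace_zero]
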